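/- arXiv:1111.5105 — 6 statements merged into one kernel-verified Lean document; each statement's English description precedes it below -/
import Mathlib

section
/- Let a, b ∈ ℂ be nonproportional (i.e., not real multiples of each other, with Im(a·conj(b)) ≠ 0). Then there exists α ∈ ℂ such that max over λ on the line segment [a,b] of |1 - αλ| is strictly less than 1. -/
theorem stmt1 (a b : ℂ) (h : (a * (starRingEnd ℂ) b).im ≠ 0) :
    ∃ α : ℂ, ∀ l ∈ segment ℝ a b, ‖1 - α * l‖ < 1 := by
  set D : ℝ := (a * (starRingEnd ℂ) b).im with hDdef
  have hD : D = a.im * b.re - a.re * b.im := by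
    simp [hDdef, Complex.mul_im, Complex.conj_re, Complex.conj_im]
    ring
  set c : ℂ := ⟨(a.im - b.im) / D, (a.re - b.re) / D⟩ with hc
  have hca : (c * a).re = 1 := by
    simp only [Complex.mul_re, hc]
    field_simp
    rw [hD]; ring
  have hcb : (c * b).re = 1 := by
    simp only [Complex.mul_re, hc]
    field_simp
    rw [hD]; ring
  set M : ℝ := ‖a‖ + ‖b‖ with hM
  set t : ℝ := 1 / (Complex.normSq c * M ^ 2 + 1) with ht
  have hden : 0 < Complex.normSq c * M ^ 2 + 1 := by
    nlinarith [Complex.normSq_nonneg c, sq_nonneg M]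
  have htpos : 0 < t := by positivity
  refine ⟨(t : ℂ) * c, ?_⟩
  rintro l hl
  obtain ⟨u, v, hu, hv, huv, rfl⟩ := hl
  have hre : (c * (u • a + v • b)).re = 1 := by
    have : c * (u • a + v • b) = u • (c * a) + v • (c * b) := by
      simp [smul_eq_mul]; ring
    rw [this]
    simp [Complex.add_re, Complex.smul_re, hca, hcb, huv]
  have habs : ‖u • a + v • b‖ ≤ M := by
    calc ‖u • a + v • b‖ ≤ ‖u • a‖ + ‖v • b‖ :=
          norm_add_le _ _
      _ = u * ‖a‖ + v * ‖b‖ := by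
          simp [Complex.norm_of_nonneg, abs_of_nonneg hu, abs_of_nonneg hv, norm_smul]
      _ ≤ M := by
          have h1 : u * ‖a‖ ≤ u * M := by
            apply mul_le_mul_of_nonneg_left _ hu
            simp [hM, norm_nonneg]
          have h2 : v * ‖b‖ ≤ v * M := by
            apply mul_le_mul_of_nonneg_left _ hv
            simp [hM, norm_nonneg]
          have h3 : u * M + v * M = M := by rw [← add_mul, huv, one_mul]
          linarith
  set l := u • a + v • b
  have key : Complex.normSq (1 - (t : ℂ) * c * l) < 1 := by
    have expand : Complex.normSq (1 - (t : ℂ) * c * l)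
        = 1 - 2 * t * (c * l).re + t ^ 2 * Complex.normSq (c * l) := by
      simp [Complex.normSq_sub, Complex.normSq_mul, Complex.normSq_one]
      simp [Complex.normSq_apply, Complex.mul_re, Complex.mul_im]
      ring
    rw [expand, hre]
    have hcl : Complex.normSq (c * l) ≤ Complex.normSq c * M ^ 2 := by
      rw [Complex.normSq_mul]
      have : Complex.normSq l ≤ M ^ 2 := by
        rw [← Complex.sq_norm]
        have h0 : (0:ℝ) ≤ ‖l‖ := norm_nonneg _
        nlinarith [habs]
      nlinarith [Complex.normSq_nonneg c]
    have htlt : t * (Complex.normSq c * M ^ 2) < 1 := by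
      rw [ht]
      rw [div_mul_eq_mul_div, div_lt_one hden]
      linarith
    nlinarith [sq_nonneg t, htpos]
  have := Complex.sq_norm (1 - (t : ℂ) * c * l)
  nlinarith [norm_nonneg (1 - (t : ℂ) * c * l)]
end

section
/- With the same setup (A Hermitian positive semidefinite, z with arg z = φ ∈ (-π,π), A_z = zI + A, |‖v‖|² = |z|‖v‖² + (Av,v)), for every v: |(A_z v, v)| ≥ cos(φ/2)·|‖v‖|². -/
theorem stmt12 {V : Type*} [NormedAddCommGroup V] [InnerProductSpace ℂ V]
    [FiniteDimensional ℂ V]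
    (A : V →ₗ[ℂ] V) (hA : A.IsSymmetric)
    (hpsd : ∀ v : V, 0 ≤ ((inner ℂ v (A v) : ℂ)).re)
    (z : ℂ) (hz : z.arg ∈ Set.Ioo (-Real.pi) Real.pi) (hz0 : z ≠ 0)
    (tb : V → ℝ)
    (htb : tb = fun v : V =>
      Real.sqrt (‖z‖ * ‖v‖ ^ 2 + ((inner ℂ v (A v) : ℂ)).re)) :
    ∀ v : V, Real.cos (z.arg / 2) * tb v ^ 2 ≤
      ‖(inner ℂ v (z • v + A v) : ℂ)‖ := by
  intro v
  set φ := z.arg with hφ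
  set a : ℝ := ((inner ℂ v (A v) : ℂ)).re with ha
  have ha0 : 0 ≤ a := hpsd v
  -- inner ℂ v (A v) is real
  have hreal : (inner ℂ v (A v) : ℂ) = (a : ℂ) := by
    have h1 : (inner ℂ (A v) v : ℂ) = inner ℂ v (A v) := hA v v
    have h2 : starRingEnd ℂ (inner ℂ (A v) v : ℂ) = inner ℂ v (A v) :=
      inner_conj_symm v (A v)
    rw [h1] at h2
    have him : ((inner ℂ v (A v) : ℂ)).im = 0 := by
      have := congrArg Complex.im h2
      rw [Complex.conj_im] at this
      linarith
    exact Complex.ext rfl him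
  have hw : (inner ℂ v (z • v + A v) : ℂ) = z * (‖v‖ : ℂ) ^ 2 + (a : ℂ) := by
    rw [inner_add_right, inner_smul_right, hreal, inner_self_eq_norm_sq_to_K]
    norm_cast
  set w : ℂ := inner ℂ v (z • v + A v) with hwdef
  set β : ℂ := Complex.exp (-(φ / 2) * Complex.I) with hβ
  have hβabs : ‖β‖ = 1 := by
    rw [hβ]
    simpa using Complex.norm_exp_ofReal_mul_I (-(φ / 2))
  have hβre : β.re = Real.cos (φ / 2) := by
    rw [hβ]
    rw [show (-(↑(φ:ℝ)/2) : ℂ) * Complex.I = ((-(φ/2) : ℝ) : ℂ) * Complex.I by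
      push_cast; ring]
    rw [Complex.exp_ofReal_mul_I_re]
    simp [Real.cos_neg]
  have hβz : (β * z).re = ‖z‖ * Real.cos (φ / 2) := by
    have hz' : z = ‖z‖ * Complex.exp (φ * Complex.I) := by
      rw [hφ]; exact (Complex.norm_mul_exp_arg_mul_I z).symm
    have hmul : β * z = (‖z‖ : ℂ) * Complex.exp (((φ/2 : ℝ) : ℂ) * Complex.I) := by
      conv_lhs => rw [hz']
      calc β * ((‖z‖ : ℂ) * Complex.exp ((φ : ℂ) * Complex.I))
          = (‖z‖ : ℂ) *
            (Complex.exp (-((φ : ℂ)/2) * Complex.I) * Complex.exp ((φ : ℂ) * Complex.I)) := by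
            rw [hβ]; ring
        _ = (‖z‖ : ℂ) * Complex.exp (((φ/2 : ℝ) : ℂ) * Complex.I) := by
            rw [← Complex.exp_add]; congr 1; push_cast; ring
    rw [hmul, Complex.re_ofReal_mul, Complex.exp_ofReal_mul_I_re]
  -- key bound: Re (β * w) ≤ |w|
  have hkey : (β * w).re ≤ ‖w‖ := by
    calc (β * w).re ≤ ‖β * w‖ := Complex.re_le_norm _
      _ = ‖w‖ := by rw [norm_mul, hβabs, one_mul]
  have hβw : (β * w).re = Real.cos (φ / 2) * (‖z‖ * ‖v‖ ^ 2 + a) := by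
    rw [hw]
    have : β * (z * (‖v‖ : ℂ) ^ 2 + (a : ℂ)) = (β * z) * (‖v‖ : ℂ) ^ 2 + β * (a : ℂ) := by
      ring
    rw [this]
    rw [Complex.add_re]
    have h1 : ((β * z) * (‖v‖ : ℂ) ^ 2).re = (β * z).re * ‖v‖ ^ 2 := by
      rw [show ((‖v‖ : ℂ))^2 = ((‖v‖^2 : ℝ) : ℂ) by push_cast; ring,
        mul_comm (β * z), Complex.re_ofReal_mul]
      ring
    have h2 : (β * (a : ℂ)).re = β.re * a := by
      simp [Complex.mul_re]
    rw [h1, h2, hβz, hβre]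
    ring
  have htb2 : tb v ^ 2 = ‖z‖ * ‖v‖ ^ 2 + a := by
    rw [htb]
    apply Real.sq_sqrt
    exact add_nonneg (by positivity) ha0
  rw [htb2]
  calc Real.cos (φ / 2) * (‖z‖ * ‖v‖ ^ 2 + a) = (β * w).re := hβw.symm
    _ ≤ ‖w‖ := hkey
end

section
/- Galerkin quasi-optimality with sector constant: Let A be Hermitian positive definite, z with arg z = φ ∈ (-π,π), A_z = zI + A, and W ⊆ V a subspace. Suppose w ∈ V solves A_z w = g, and w_n ∈ w₀ + W satisfies (A_z w_n, φ') = (g, φ') for all φ' ∈ W. Then |‖w_n - w‖| ≤ sec(φ/2) · inf over v ∈ w₀ + W of |‖v - w‖|, where |‖v‖|² = |z|‖v‖² + (Av,v). -/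
theorem sector_key (z : ℂ) (hz0 : z ≠ 0)
    (a r : ℝ) :
    Real.cos (z.arg/2) * (‖z‖ * a + r) ≤ ‖(a:ℂ) * z + r‖ := by
  set θ := z.arg / 2 with hθ
  have habs : ‖z‖ ≠ 0 := norm_ne_zero_iff.mpr hz0
  have h1 : z.re = ‖z‖ * Real.cos z.arg := by
    rw [Complex.cos_arg hz0]; field_simp
  have h2 : z.im = ‖z‖ * Real.sin z.arg := by
    rw [Complex.sin_arg]; field_simp
  have hcs : Real.cos z.arg * Real.cos θ + Real.sin z.arg * Real.sin θ = Real.cos θ := by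
    rw [← Real.cos_sub]; congr 1; rw [hθ]; ring
  have hre : (((a:ℂ) * z + r) * Complex.exp (((-θ : ℝ) : ℂ) * Complex.I)).re
      = Real.cos θ * (‖z‖ * a + r) := by
    rw [Complex.exp_mul_I]
    simp only [Complex.add_re, Complex.add_im, Complex.mul_re, Complex.mul_im,
      Complex.ofReal_re, Complex.ofReal_im, Complex.I_re, Complex.I_im,
      Complex.cos_ofReal_re, Complex.cos_ofReal_im,
      Complex.sin_ofReal_re, Complex.sin_ofReal_im,
      Real.cos_neg, Real.sin_neg, mul_zero, mul_one, zero_mul, sub_zero, add_zero,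
      zero_sub, zero_add, mul_neg, neg_neg, neg_zero]
    rw [h1, h2]
    linear_combination a * ‖z‖ * hcs
  calc Real.cos θ * (‖z‖ * a + r)
      = (((a:ℂ) * z + r) * Complex.exp (((-θ : ℝ) : ℂ) * Complex.I)).re := hre.symm
    _ ≤ ‖((a:ℂ) * z + r) * Complex.exp (((-θ : ℝ) : ℂ) * Complex.I)‖ := Complex.re_le_norm _
    _ = ‖(a:ℂ) * z + r‖ := by
        rw [norm_mul, Complex.norm_exp_ofReal_mul_I, mul_one]

theorem stmt13 {V : Type*} [NormedAddCommGroup V] [InnerProductSpace ℂ V]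
    [FiniteDimensional ℂ V]
    (A : V →ₗ[ℂ] V) (hA : A.IsSymmetric)
    (hpos : ∀ v : V, v ≠ 0 → 0 < ((inner ℂ v (A v) : ℂ)).re)
    (z : ℂ) (hz : z.arg ∈ Set.Ioo (-Real.pi) Real.pi) (hz0 : z ≠ 0)
    (W : Submodule ℂ V) (g w w0 wn : V)
    (hw : z • w + A w = g) (hwn : wn - w0 ∈ W)
    (hgal : ∀ φ ∈ W, (inner ℂ φ (z • wn + A wn) : ℂ) = (inner ℂ φ g : ℂ))
    (tb : V → ℝ)
    (htb : tb = fun v : V =>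
      Real.sqrt (‖z‖ * ‖v‖ ^ 2 + ((inner ℂ v (A v) : ℂ)).re)) :
    ∀ v : V, v - w0 ∈ W →
      tb (wn - w) ≤ (1 / Real.cos (z.arg / 2)) * tb (v - w) := by
  intro v hv
  have hc : 0 < Real.cos (z.arg / 2) :=
    Real.cos_pos_of_mem_Ioo ⟨by linarith [hz.1], by linarith [hz.2]⟩
  set b : V → ℝ := fun u => ((inner ℂ u (A u) : ℂ)).re with hb
  have hbnonneg : ∀ u, 0 ≤ b u := by
    intro u
    by_cases h : u = 0
    · simp [hb, h]
    · exact (hpos u h).le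
  -- inner u (A u) is real
  have hreal : ∀ u : V, (inner ℂ u (A u) : ℂ) = (b u : ℂ) := by
    intro u
    have h1 : (starRingEnd ℂ) (inner ℂ u (A u) : ℂ) = (inner ℂ u (A u) : ℂ) := by
      rw [inner_conj_symm]; exact hA u u
    have him : ((inner ℂ u (A u) : ℂ)).im = 0 := Complex.conj_eq_iff_im.mp h1
    apply Complex.ext <;> simp [hb, him]
  -- conj of cross inner
  have hconj : ∀ u u' : V, (inner ℂ u' (A u) : ℂ) = (starRingEnd ℂ) (inner ℂ u (A u') : ℂ) := by
    intro u u'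
    rw [inner_conj_symm]
    exact (hA u' u).symm
  -- real-part Cauchy-Schwarz for A
  have hreCS : ∀ u u' : V, ((inner ℂ u (A u') : ℂ)).re ^ 2 ≤ b u * b u' := by
    intro u u'
    have hq : ∀ t : ℝ, 0 ≤ b u' * (t * t) + (2 * ((inner ℂ u (A u') : ℂ)).re) * t + b u := by
      intro t
      have h0 := hbnonneg (u + (t:ℂ) • u')
      have hexp : b (u + (t:ℂ) • u')
          = b u' * (t * t) + (2 * ((inner ℂ u (A u') : ℂ)).re) * t + b u := by
        simp only [hb, map_add, map_smul, inner_add_left, inner_add_right,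
          inner_smul_left, inner_smul_right, hconj u u', Complex.add_re,
          Complex.mul_re, Complex.conj_re, Complex.conj_im, Complex.ofReal_re,
          Complex.ofReal_im]
        ring
      linarith [hexp ▸ h0]
    have hd := discrim_le_zero hq
    rw [discrim] at hd
    nlinarith [hd]
  -- Cauchy-Schwarz in absolute value
  have hCS : ∀ u u' : V, ‖(inner ℂ u (A u') : ℂ)‖
      ≤ Real.sqrt (b u) * Real.sqrt (b u') := by
    intro u u'
    by_cases hα : (inner ℂ u (A u') : ℂ) = 0
    · rw [hα]; simp; positivity
    · set α := (inner ℂ u (A u') : ℂ) with hαdef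
      have habsne : (‖α‖ : ℝ) ≠ 0 := norm_ne_zero_iff.mpr hα
      set c0 : ℂ := α / (‖α‖ : ℂ) with hc0
      have h1 : (inner ℂ (c0 • u) (A u') : ℂ) = (‖α‖ : ℂ) := by
        rw [inner_smul_left, ← hαdef, hc0]
        rw [map_div₀, Complex.conj_ofReal]
        field_simp
        rw [← Complex.normSq_eq_conj_mul_self, Complex.normSq_eq_norm_sq]
        push_cast
        rw [sq, mul_div_assoc, div_self (Complex.ofReal_ne_zero.mpr habsne), mul_one]
      have h2 : b (c0 • u) = b u := by
        simp only [hb, map_smul, inner_smul_left, inner_smul_right]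
        have hone : c0 * (starRingEnd ℂ) c0 = 1 := by
          rw [Complex.mul_conj, hc0, Complex.normSq_div, Complex.normSq_ofReal,
            Complex.normSq_eq_norm_sq]
          have : ‖α‖ ^ 2 / (‖α‖ * ‖α‖) = 1 := by
            field_simp [sq]
          rw [this, Complex.ofReal_one]
        rw [← mul_assoc, hone, one_mul]
      have h3 := hreCS (c0 • u) u'
      rw [h1, h2] at h3
      simp only [Complex.ofReal_re] at h3
      calc ‖α‖ = Real.sqrt (‖α‖ ^ 2) := by
            rw [Real.sqrt_sq (norm_nonneg _)]
        _ ≤ Real.sqrt (b u * b u') := Real.sqrt_le_sqrt h3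
        _ = Real.sqrt (b u) * Real.sqrt (b u') := Real.sqrt_mul (hbnonneg u) _
  -- basic tb facts
  have htb0 : ∀ u : V, 0 ≤ tb u := by
    intro u; rw [htb]; exact Real.sqrt_nonneg _
  have htbsq : ∀ u : V, tb u ^ 2 = ‖z‖ * ‖u‖ ^ 2 + b u := by
    intro u; rw [htb]
    exact Real.sq_sqrt (add_nonneg (by positivity) (hbnonneg u))
  -- continuity
  have hcont : ∀ u u' : V, ‖(inner ℂ u (z • u' + A u') : ℂ)‖ ≤ tb u * tb u' := by
    intro u u'
    have h1 : (inner ℂ u (z • u' + A u') : ℂ) = z * inner ℂ u u' + inner ℂ u (A u') := by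
      rw [inner_add_right, inner_smul_right]
    have h2 : ‖(inner ℂ u (z • u' + A u') : ℂ)‖
        ≤ ‖z‖ * (‖u‖ * ‖u'‖) + Real.sqrt (b u) * Real.sqrt (b u') := by
      rw [h1]
      calc ‖z * inner ℂ u u' + inner ℂ u (A u')‖
          ≤ ‖z * (inner ℂ u u' : ℂ)‖ + ‖(inner ℂ u (A u') : ℂ)‖ :=
            norm_add_le _ _
        _ ≤ ‖z‖ * (‖u‖ * ‖u'‖) + Real.sqrt (b u) * Real.sqrt (b u') := by
            gcongr
            · rw [norm_mul]
              gcongr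
              exact norm_inner_le_norm u u'
            · exact hCS u u'
    refine h2.trans ?_
    rw [htb]
    simp only
    have key2 : ∀ x1 x2 y1 y2 : ℝ, 0 ≤ x1 → 0 ≤ x2 → 0 ≤ y1 → 0 ≤ y2 →
        x1 * y1 + x2 * y2 ≤ Real.sqrt (x1 ^ 2 + x2 ^ 2) * Real.sqrt (y1 ^ 2 + y2 ^ 2) := by
      intro x1 x2 y1 y2 hx1 hx2 hy1 hy2
      rw [← Real.sqrt_mul (by positivity)]
      rw [show x1 * y1 + x2 * y2 = Real.sqrt ((x1 * y1 + x2 * y2) ^ 2) from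
        (Real.sqrt_sq (by positivity)).symm]
      apply Real.sqrt_le_sqrt
      nlinarith [sq_nonneg (x1 * y2 - x2 * y1)]
    have hms : Real.sqrt (‖z‖) * Real.sqrt (‖z‖) = ‖z‖ :=
      Real.mul_self_sqrt (norm_nonneg z)
    have heq : ‖z‖ * (‖u‖ * ‖u'‖) + Real.sqrt (b u) * Real.sqrt (b u')
        = Real.sqrt (‖z‖) * ‖u‖ * (Real.sqrt (‖z‖) * ‖u'‖)
          + Real.sqrt (b u) * Real.sqrt (b u') := by
      linear_combination ‖u‖ * ‖u'‖ * hms.symm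
    rw [heq]
    have h3 := key2 (Real.sqrt (‖z‖) * ‖u‖) (Real.sqrt (b u))
      (Real.sqrt (‖z‖) * ‖u'‖) (Real.sqrt (b u')) (by positivity)
      (Real.sqrt_nonneg _) (by positivity) (Real.sqrt_nonneg _)
    refine h3.trans (le_of_eq ?_)
    congr 1 <;>
    · rw [mul_pow, Real.sq_sqrt (norm_nonneg z), Real.sq_sqrt (hbnonneg _)]
  -- coercivity
  have hcoer : ∀ u : V, Real.cos (z.arg / 2) * tb u ^ 2
      ≤ ‖(inner ℂ u (z • u + A u) : ℂ)‖ := by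
    intro u
    have h1 : (inner ℂ u (z • u + A u) : ℂ) = ((‖u‖ ^ 2 : ℝ) : ℂ) * z + ((b u : ℝ) : ℂ) := by
      rw [inner_add_right, inner_smul_right, hreal u, inner_self_eq_norm_sq_to_K]
      norm_num
      ring
    rw [h1, htbsq u]
    exact sector_key z hz0 (‖u‖ ^ 2) (b u)
  -- Galerkin orthogonality
  have hgal0 : ∀ φ ∈ W, (inner ℂ φ (z • (wn - w) + A (wn - w)) : ℂ) = 0 := by
    intro φ hφ
    have h1 : z • (wn - w) + A (wn - w) = (z • wn + A wn) - g := by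
      rw [← hw, smul_sub, map_sub]; abel
    rw [h1, inner_sub_right, hgal φ hφ, sub_self]
  -- combine
  set e := wn - w with he
  have hφW : wn - v ∈ W := by
    have h := W.sub_mem hwn hv
    have : wn - w0 - (v - w0) = wn - v := by abel
    rwa [this] at h
  have hsplit : (inner ℂ e (z • e + A e) : ℂ) = inner ℂ (v - w) (z • e + A e) := by
    have h4 : (inner ℂ e (z • e + A e) : ℂ)
        = inner ℂ (v - w) (z • e + A e) + inner ℂ (wn - v) (z • e + A e) := by
      rw [← inner_add_left]
      congr 1
      rw [he]; abel
    rw [h4, hgal0 (wn - v) hφW, add_zero]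
  have hmain : Real.cos (z.arg / 2) * tb e ^ 2 ≤ tb (v - w) * tb e := by
    calc Real.cos (z.arg / 2) * tb e ^ 2 ≤ ‖(inner ℂ e (z • e + A e) : ℂ)‖ := hcoer e
      _ = ‖(inner ℂ (v - w) (z • e + A e) : ℂ)‖ := by rw [hsplit]
      _ ≤ tb (v - w) * tb e := hcont (v - w) e
  rcases eq_or_lt_of_le (htb0 e) with h0 | h0
  · rw [← h0]
    exact mul_nonneg (le_of_lt (by positivity)) (htb0 _)
  · have h1 : Real.cos (z.arg / 2) * tb e ≤ tb (v - w) := by nlinarith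
    rw [one_div, inv_mul_eq_div, le_div_iff₀ hc]
    linarith [mul_comm (Real.cos (z.arg / 2)) (tb e)]
end

section
/- Polynomial error bound for CG with complex shift: Under the setup of the previous statement with W = V_n the Krylov space span{r₀, A r₀, …, A^{n-1} r₀}, r₀ = g - A_z w₀, for any polynomial Q of degree ≤ n with Q(0) = 1, the error e_n = w_n - w satisfies |‖e_n‖| ≤ sec(φ/2) · max over λ ∈ σ(A) of |Q(z + λ)| · |‖e₀‖|. -/
lemma stmt14_coer_aux (z : ℂ) (hz0 : z ≠ 0) (hz : z.arg ∈ Set.Ioo (-Real.pi) Real.pi)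
    (s t : ℝ) (hs : 0 ≤ s) (ht : 0 ≤ t) :
    Real.cos (z.arg / 2) * (‖z‖ * t + s) ≤ ‖(z * t + s)‖ := by
  set c := Real.cos (z.arg / 2) with hc
  have hcpos : 0 < c := by
    apply Real.cos_pos_of_mem_Ioo
    constructor
    · have := hz.1; linarith
    · have := hz.2; linarith
  have hc1 : c ≤ 1 := Real.cos_le_one _
  have hre : z.re = ‖z‖ * (2 * c ^ 2 - 1) := by
    have h1 : Real.cos z.arg = z.re / ‖z‖ := Complex.cos_arg hz0
    have h2 : c ^ 2 = 1 / 2 + Real.cos (2 * (z.arg / 2)) / 2 := Real.cos_sq _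
    rw [show 2 * (z.arg / 2) = z.arg by ring] at h2
    have habs : (0:ℝ) < ‖z‖ := by
      simpa using norm_pos_iff.mpr hz0
    field_simp at h1
    rw [← h1, h2]; ring
  have hsq : z.re ^ 2 + z.im ^ 2 = ‖z‖ ^ 2 := by
    rw [Complex.sq_norm, Complex.normSq_apply]; ring
  have hA2 : ‖(z * t + s)‖ ^ 2 = (z.re * t + s) ^ 2 + (z.im * t) ^ 2 := by
    rw [Complex.sq_norm, Complex.normSq_apply]
    simp [Complex.add_re, Complex.add_im, Complex.mul_re, Complex.mul_im]
    ring
  have hAnn : 0 ≤ ‖(z * t + s)‖ := norm_nonneg _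
  set A := ‖(z * t + s)‖
  set z1 := ‖z‖ with hz1
  have hz1nn : 0 ≤ z1 := norm_nonneg _
  have hA2' : A ^ 2 = z1^2*t^2 + 2*z1*(2*c^2-1)*t*s + s^2 := by
    linear_combination hA2 + t^2*hsq + 2*t*s*hre
  have h1c : 0 ≤ 1 - c^2 := by nlinarith
  have hX : 0 ≤ c * (z1 * t + s) := by positivity
  nlinarith [mul_nonneg h1c (sq_nonneg (z1*t - s)), sq_nonneg (A - c*(z1*t+s)),
    mul_nonneg hAnn hX]

open Polynomial in
theorem stmt14 {V : Type*} [NormedAddCommGroup V] [InnerProductSpace ℂ V]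
    [FiniteDimensional ℂ V]
    (A : V →ₗ[ℂ] V) (hA : A.IsSymmetric)
    (hpos : ∀ v : V, v ≠ 0 → 0 < ((inner ℂ v (A v) : ℂ)).re)
    (z : ℂ) (hz : z.arg ∈ Set.Ioo (-Real.pi) Real.pi) (hz0 : z ≠ 0)
    (g w w0 wn : V) (n : ℕ)
    (hw : z • w + A w = g)
    (r0 : V) (hr0 : r0 = g - (z • w0 + A w0))
    (Vn : Submodule ℂ V)
    (hVn : Vn = Submodule.span ℂ {x : V | ∃ k < n, x = (A ^ k) r0})
    (hwn : wn - w0 ∈ Vn)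
    (hgal : ∀ φ ∈ Vn, (inner ℂ φ (z • wn + A wn) : ℂ) = (inner ℂ φ g : ℂ))
    (Q : Polynomial ℂ) (hdeg : Q.natDegree ≤ n) (hQ0 : Q.eval 0 = 1)
    (C : ℝ)
    (hC : ∀ μ : ℂ, Module.End.HasEigenvalue A μ →
      ‖Q.eval (z + μ)‖ ≤ C)
    (tb : V → ℝ)
    (htb : tb = fun v : V =>
      Real.sqrt (‖z‖ * ‖v‖ ^ 2 + ((inner ℂ v (A v) : ℂ)).re)) :
    tb (wn - w) ≤ (1 / Real.cos (z.arg / 2)) * C * tb (w0 - w) := by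
  classical
  -- trivial case: V trivial
  by_cases hVtriv : Module.finrank ℂ V = 0
  · have hsub : Subsingleton V := Module.finrank_zero_iff.mp hVtriv
    have h1 : wn - w = 0 := Subsingleton.elim _ _
    have h2 : w0 - w = 0 := Subsingleton.elim _ _
    rw [htb, h1, h2]
    simp
  -- basic positivity facts
  have hpos' : ∀ v : V, 0 ≤ ((inner ℂ v (A v) : ℂ)).re := by
    intro v
    rcases eq_or_ne v 0 with h | h
    · simp [h]
    · exact (hpos v h).le
  set c := Real.cos (z.arg / 2) with hc
  have hcpos : 0 < c := by
    apply Real.cos_pos_of_mem_Ioo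
    constructor
    · have := hz.1; linarith
    · have := hz.2; linarith
  -- the shifted operator
  set B : V →ₗ[ℂ] V := z • (LinearMap.id : V →ₗ[ℂ] V) + A with hBdef
  have hBapp : ∀ v : V, B v = z • v + A v := by
    intro v; simp [hBdef]
  -- spectral setup
  have hN : Module.finrank ℂ V = Module.finrank ℂ V := rfl
  set b := hA.eigenvectorBasis hN with hb
  set μ := hA.eigenvalues hN with hμ
  have hAb : ∀ i, A (b i) = (μ i : ℂ) • b i := fun i => hA.apply_eigenvectorBasis hN i
  have hbne : ∀ i, b i ≠ 0 := fun i => b.toBasis.ne_zero i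
  have hbnorm : ∀ i, (inner ℂ (b i) (b i) : ℂ) = 1 := by
    intro i
    rw [inner_self_eq_norm_sq_to_K]
    norm_num [b.orthonormal.1 i]
  have hμpos : ∀ i, 0 < μ i := by
    intro i
    have h := hpos (b i) (hbne i)
    rw [hAb i, inner_smul_right, hbnorm i, mul_one] at h
    simpa using h
  have hS1 : ∀ x y : V, (inner ℂ x y : ℂ) = ∑ i, (inner ℂ x (b i) : ℂ) * (inner ℂ (b i) y : ℂ) :=
    fun x y => (b.sum_inner_mul_inner x y).symm
  have hS2 : ∀ x y : V, (inner ℂ x (A y) : ℂ)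
      = ∑ i, (μ i : ℂ) * ((inner ℂ x (b i) : ℂ) * (inner ℂ (b i) y : ℂ)) := by
    intro x y
    rw [hS1 x (A y)]
    congr 1; ext i
    have h2 : (inner ℂ (b i) (A y) : ℂ) = (μ i : ℂ) * inner ℂ (b i) y := by
      rw [← hA (b i) y, hAb i, inner_smul_left, Complex.conj_ofReal]
    rw [h2]; ring
  have habsc : ∀ d : ℂ, (starRingEnd ℂ) d * d = ((‖d‖ ^ 2 : ℝ) : ℂ) := by
    intro d
    rw [mul_comm, Complex.mul_conj, Complex.normSq_eq_norm_sq]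
  have hcc : ∀ (x : V) i, (inner ℂ x (b i) : ℂ) * (inner ℂ (b i) x : ℂ)
      = ((‖(inner ℂ (b i) x : ℂ)‖ ^ 2 : ℝ) : ℂ) := by
    intro x i
    rw [show (inner ℂ x (b i) : ℂ) = (starRingEnd ℂ) (inner ℂ (b i) x : ℂ) from
      (inner_conj_symm x (b i)).symm]
    exact habsc _
  have hnrm : ∀ x : V, ‖x‖ ^ 2 = ∑ i, ‖(inner ℂ (b i) x : ℂ)‖ ^ 2 := by
    intro x
    have h0 : (inner ℂ x x : ℂ) = ((∑ i, ‖(inner ℂ (b i) x : ℂ)‖ ^ 2 : ℝ) : ℂ) := by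
      rw [hS1 x x, Complex.ofReal_sum]
      exact Finset.sum_congr rfl fun i _ => hcc x i
    rw [← inner_self_eq_norm_sq (𝕜 := ℂ) x, h0]
    exact RCLike.ofReal_re _
  have hAx : ∀ x : V, ((inner ℂ x (A x) : ℂ)).re
      = ∑ i, μ i * ‖(inner ℂ (b i) x : ℂ)‖ ^ 2 := by
    intro x
    have h0 : (inner ℂ x (A x) : ℂ)
        = ((∑ i, μ i * ‖(inner ℂ (b i) x : ℂ)‖ ^ 2 : ℝ) : ℂ) := by
      rw [hS2 x x, Complex.ofReal_sum]
      refine Finset.sum_congr rfl fun i _ => ?_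
      rw [hcc x i]
      norm_cast
    rw [h0, Complex.ofReal_re]
  -- the weighted quantity
  set F : V → ℝ := fun x => ‖z‖ * ‖x‖ ^ 2 + ((inner ℂ x (A x) : ℂ)).re with hF
  have hFsum : ∀ x : V, F x = ∑ i, (‖z‖ + μ i) * ‖(inner ℂ (b i) x : ℂ)‖ ^ 2 := by
    intro x
    rw [hF]
    simp only
    rw [hnrm x, hAx x, Finset.mul_sum, ← Finset.sum_add_distrib]
    congr 1; ext i; ring
  have hFnn : ∀ x : V, 0 ≤ F x := by
    intro x
    rw [hF]
    have := hpos' x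
    positivity
  have htbF : ∀ x : V, tb x = Real.sqrt (F x) := by intro x; rw [htb, hF]
  -- the B-sesquilinear form expansion
  have hS4 : ∀ u v : V, (inner ℂ u (B v) : ℂ)
      = ∑ i, (z + (μ i : ℂ)) * ((inner ℂ u (b i) : ℂ) * (inner ℂ (b i) v : ℂ)) := by
    intro u v
    rw [hBapp, inner_add_right, inner_smul_right, hS1 u v, hS2 u v, Finset.mul_sum,
      ← Finset.sum_add_distrib]
    congr 1; ext i; ring
  -- Cauchy-Schwarz for the B-form
  have hCS : ∀ u v : V, ‖(inner ℂ u (B v) : ℂ)‖ ≤ Real.sqrt (F u) * Real.sqrt (F v) := by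
    intro u v
    rw [hS4 u v]
    calc ‖(∑ i, (z + (μ i : ℂ)) * ((inner ℂ u (b i) : ℂ) * (inner ℂ (b i) v : ℂ)))‖
        ≤ ∑ i, ‖((z + (μ i : ℂ)) * ((inner ℂ u (b i) : ℂ) * (inner ℂ (b i) v : ℂ)))‖ :=
          norm_sum_le _ _
      _ ≤ ∑ i, (‖z‖ + μ i) *
            (‖(inner ℂ (b i) u : ℂ)‖ * ‖(inner ℂ (b i) v : ℂ)‖) := by
          refine Finset.sum_le_sum fun i _ => ?_
          rw [norm_mul, norm_mul]
          have h1 : ‖(z + (μ i : ℂ))‖ ≤ ‖z‖ + μ i := by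
            refine (norm_add_le _ _).trans ?_
            rw [Complex.norm_real, Real.norm_eq_abs, abs_of_pos (hμpos i)]
          have h2 : ‖(inner ℂ u (b i) : ℂ)‖ = ‖(inner ℂ (b i) u : ℂ)‖ := by
            rw [← inner_conj_symm (b i) u, Complex.norm_conj]
          rw [h2]
          have hnn : 0 ≤ ‖(inner ℂ (b i) u : ℂ)‖ * ‖(inner ℂ (b i) v : ℂ)‖ := by
            positivity
          exact mul_le_mul_of_nonneg_right h1 hnn
      _ = ∑ i, Real.sqrt ((‖z‖ + μ i) * ‖(inner ℂ (b i) u : ℂ)‖ ^ 2) *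
            Real.sqrt ((‖z‖ + μ i) * ‖(inner ℂ (b i) v : ℂ)‖ ^ 2) := by
          refine Finset.sum_congr rfl fun i _ => ?_
          have hw : (0:ℝ) ≤ ‖z‖ + μ i := by
            have := hμpos i
            positivity
          rw [Real.sqrt_mul hw, Real.sqrt_mul hw, Real.sqrt_sq (norm_nonneg _),
            Real.sqrt_sq (norm_nonneg _),
            show Real.sqrt (‖z‖ + μ i) * ‖(inner ℂ (b i) u : ℂ)‖ *
              (Real.sqrt (‖z‖ + μ i) * ‖(inner ℂ (b i) v : ℂ)‖)
              = (Real.sqrt (‖z‖ + μ i) * Real.sqrt (‖z‖ + μ i)) *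
                (‖(inner ℂ (b i) u : ℂ)‖ * ‖(inner ℂ (b i) v : ℂ)‖) from by ring,
            Real.mul_self_sqrt hw]
      _ ≤ Real.sqrt (∑ i, (‖z‖ + μ i) * ‖(inner ℂ (b i) u : ℂ)‖ ^ 2) *
            Real.sqrt (∑ i, (‖z‖ + μ i) * ‖(inner ℂ (b i) v : ℂ)‖ ^ 2) := by
          apply Real.sum_sqrt_mul_sqrt_le
          · intro i
            have := hμpos i
            positivity
          · intro i
            have := hμpos i
            positivity
      _ = Real.sqrt (F u) * Real.sqrt (F v) := by rw [hFsum u, hFsum v]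
  -- realness of the quadratic form of A
  have hAreal : ∀ x : V, (inner ℂ x (A x) : ℂ) = (((inner ℂ x (A x) : ℂ)).re : ℂ) := by
    intro x
    have h1 : (starRingEnd ℂ) (inner ℂ x (A x) : ℂ) = (inner ℂ x (A x) : ℂ) := by
      rw [inner_conj_symm (A x) x, hA x x]
    exact (Complex.conj_eq_iff_re.mp h1).symm
  -- coercivity
  have hcoer : ∀ v : V, c * F v ≤ ‖(inner ℂ v (B v) : ℂ)‖ := by
    intro v
    have h1 : (inner ℂ v (B v) : ℂ) = z * (‖v‖ ^ 2 : ℝ) + (((inner ℂ v (A v) : ℂ)).re : ℝ) := by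
      rw [hBapp, inner_add_right, inner_smul_right, inner_self_eq_norm_sq_to_K,
        ← hAreal v]
      norm_cast
    rw [h1, hF]
    exact stmt14_coer_aux z hz0 hz _ _ (hpos' v) (by positivity)
  -- Galerkin orthogonality
  set en := wn - w with hen
  set e0 := w0 - w with he0
  have hBen : B en = (z • wn + A wn) - g := by
    rw [hBapp, hen, ← hw]
    rw [smul_sub, map_sub]
    abel
  have hgal' : ∀ φ ∈ Vn, (inner ℂ φ (B en) : ℂ) = 0 := by
    intro φ hφ
    rw [hBen, inner_sub_right, hgal φ hφ, sub_self]
  -- polynomial membership facts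
  have hApoly : ∀ P : ℂ[X], P.natDegree < n → (Polynomial.aeval A P) r0 ∈ Vn := by
    intro P hP
    rw [Polynomial.aeval_eq_sum_range (p := P) A]
    rw [LinearMap.sum_apply]
    apply Submodule.sum_mem
    intro i hi
    rw [LinearMap.smul_apply]
    apply Submodule.smul_mem
    rw [hVn]
    apply Submodule.subset_span
    refine ⟨i, ?_, rfl⟩
    simp only [Finset.mem_range] at hi
    omega
  have hBeq : B = Polynomial.aeval A (X + Polynomial.C z) := by
    rw [map_add, Polynomial.aeval_X, Polynomial.aeval_C, Module.algebraMap_end_eq_smul_id]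
    rw [hBdef]
    abel
  have hBpoly : ∀ P : ℂ[X], P.natDegree < n → (Polynomial.aeval B P) r0 ∈ Vn := by
    intro P hP
    rw [hBeq, ← Polynomial.aeval_comp]
    apply hApoly
    rw [Polynomial.natDegree_comp, Polynomial.natDegree_X_add_C, mul_one]
    exact hP
  -- the candidate vector
  set q : V := (Polynomial.aeval B Q) e0 with hqdef
  have hBe0 : B e0 = -r0 := by
    rw [hBapp, he0, hr0, ← hw]
    rw [smul_sub, map_sub]
    abel
  have hqe0 : q - e0 ∈ Vn := by
    have hQdec : Q.divX * X + Polynomial.C 1 = Q := by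
      rw [show (1:ℂ) = Q.coeff 0 by rw [Polynomial.coeff_zero_eq_eval_zero, hQ0]]
      exact Q.divX_mul_X_add
    have hq1 : q = (Polynomial.aeval B Q.divX) (B e0) + e0 := by
      conv_lhs => rw [hqdef, ← hQdec]
      rw [map_add, map_mul, Polynomial.aeval_X, Polynomial.aeval_C]
      simp [Module.End.mul_apply, Module.algebraMap_end_apply]
    rw [hq1, hBe0]
    simp only [add_sub_cancel_right, map_neg]
    apply Submodule.neg_mem
    by_cases hd : Q.divX = 0
    · rw [hd]
      simp
    · apply hBpoly
      have h1 : Q.natDegree ≠ 0 := fun h0 =>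
        hd (Polynomial.divX_eq_zero_iff.mpr (Polynomial.eq_C_of_natDegree_eq_zero h0))
      rw [Polynomial.natDegree_divX_eq_natDegree_tsub_one]
      omega
  have hqen : q - en ∈ Vn := by
    have : q - en = (q - e0) - (en - e0) := by abel
    rw [this]
    apply Submodule.sub_mem _ hqe0
    have : en - e0 = wn - w0 := by rw [hen, he0]; abel
    rw [this]
    exact hwn
  -- eigen-action of the polynomial
  have heig : ∀ i, (Polynomial.aeval B Q) (b i) = Q.eval (z + (μ i : ℂ)) • b i := by
    intro i
    apply Module.End.aeval_apply_of_hasEigenvector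
    refine ⟨?_, hbne i⟩
    rw [Module.End.mem_eigenspace_iff, hBapp, hAb i, add_smul]
  have hq_alt : q = ∑ j, (inner ℂ (b j) e0 : ℂ) • (Q.eval (z + (μ j : ℂ)) • b j) := by
    conv_lhs => rw [hqdef, ← b.sum_repr' e0]
    rw [map_sum]
    refine Finset.sum_congr rfl fun j _ => ?_
    rw [map_smul, heig j]
  have horth : ∀ i j, (inner ℂ (b i) (b j) : ℂ) = if i = j then 1 else 0 :=
    fun i j => orthonormal_iff_ite.mp b.orthonormal i j
  have hqc : ∀ i, (inner ℂ (b i) q : ℂ) = Q.eval (z + (μ i : ℂ)) * (inner ℂ (b i) e0 : ℂ) := by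
    intro i
    rw [hq_alt, inner_sum]
    simp only [inner_smul_right]
    rw [Finset.sum_eq_single i]
    · rw [horth i i]; simp; ring
    · intro j _ hji
      rw [horth i j, if_neg (fun h => hji h.symm)]
      ring
    · intro h
      exact absurd (Finset.mem_univ i) h
  -- bound on eigenvalue factors
  have hNE : Nonempty (Fin (Module.finrank ℂ V)) := by
    rw [← Fin.pos_iff_nonempty]
    omega
  have hC0 : 0 ≤ C := by
    obtain ⟨i⟩ := hNE
    exact le_trans (norm_nonneg _) (hC _ (hA.hasEigenvalue_eigenvalues hN i))
  have hCi : ∀ i, ‖(Q.eval (z + (μ i : ℂ)))‖ ≤ C :=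
    fun i => hC _ (hA.hasEigenvalue_eigenvalues hN i)
  -- bound F q ≤ C^2 * F e0
  have hFq : F q ≤ C ^ 2 * F e0 := by
    rw [hFsum q, hFsum e0, Finset.mul_sum]
    refine Finset.sum_le_sum fun i _ => ?_
    rw [hqc i, norm_mul]
    have hw' : (0:ℝ) ≤ ‖z‖ + μ i := by
      have := hμpos i
      positivity
    have h1 : (‖(Q.eval (z + (μ i : ℂ)))‖ * ‖(inner ℂ (b i) e0 : ℂ)‖) ^ 2
        ≤ C ^ 2 * ‖(inner ℂ (b i) e0 : ℂ)‖ ^ 2 := by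
      rw [mul_pow]
      apply mul_le_mul_of_nonneg_right _ (sq_nonneg _)
      exact pow_le_pow_left₀ (norm_nonneg _) (hCi i) 2
    calc (‖z‖ + μ i) *
          (‖(Q.eval (z + (μ i : ℂ)))‖ * ‖(inner ℂ (b i) e0 : ℂ)‖) ^ 2
        ≤ (‖z‖ + μ i) * (C ^ 2 * ‖(inner ℂ (b i) e0 : ℂ)‖ ^ 2) :=
          mul_le_mul_of_nonneg_left h1 hw'
      _ = C ^ 2 * ((‖z‖ + μ i) * ‖(inner ℂ (b i) e0 : ℂ)‖ ^ 2) := by ring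
  have htbq : Real.sqrt (F q) ≤ C * Real.sqrt (F e0) := by
    calc Real.sqrt (F q) ≤ Real.sqrt (C ^ 2 * F e0) := Real.sqrt_le_sqrt hFq
      _ = C * Real.sqrt (F e0) := by
          rw [Real.sqrt_mul (sq_nonneg C), Real.sqrt_sq hC0]
  -- main chain
  have hmain : c * F en ≤ (C * Real.sqrt (F e0)) * Real.sqrt (F en) := by
    have h1 : (inner ℂ en (B en) : ℂ) = (inner ℂ q (B en) : ℂ) := by
      have h2 := hgal' (q - en) hqen
      rw [inner_sub_left, sub_eq_zero] at h2
      exact h2.symm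
    calc c * F en ≤ ‖(inner ℂ en (B en) : ℂ)‖ := hcoer en
      _ = ‖(inner ℂ q (B en) : ℂ)‖ := by rw [h1]
      _ ≤ Real.sqrt (F q) * Real.sqrt (F en) := hCS q en
      _ ≤ (C * Real.sqrt (F e0)) * Real.sqrt (F en) :=
          mul_le_mul_of_nonneg_right htbq (Real.sqrt_nonneg _)
  -- conclude
  rw [htbF, htbF]
  have hsq_en : Real.sqrt (F en) ^ 2 = F en := Real.sq_sqrt (hFnn en)
  rcases eq_or_lt_of_le (Real.sqrt_nonneg (F en)) with h0 | h0
  · rw [← h0]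
    positivity
  · have h2 : c * Real.sqrt (F en) ≤ C * Real.sqrt (F e0) := by
      have h3 : c * Real.sqrt (F en) * Real.sqrt (F en) ≤
          (C * Real.sqrt (F e0)) * Real.sqrt (F en) := by
        calc c * Real.sqrt (F en) * Real.sqrt (F en) = c * F en := by
              rw [mul_assoc, ← sq, hsq_en]
          _ ≤ (C * Real.sqrt (F e0)) * Real.sqrt (F en) := hmain
      exact le_of_mul_le_mul_right h3 h0
    have h4 : Real.sqrt (F en) ≤ (C * Real.sqrt (F e0)) / c := by
      rw [le_div_iff₀ hcpos]
      nlinarith [h2]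
    calc Real.sqrt (F en) ≤ (C * Real.sqrt (F e0)) / c := h4
      _ = 1 / c * C * Real.sqrt (F e0) := by ring
end

section
/- Let 0 < λ₁ < λ_N and z ∈ ℂ with arg z ∈ (-π,π), and define η_z = -(√(λ_N+z) - √(λ₁+z))/(√(λ_N+z) + √(λ₁+z)), where square roots have argument in (-π/2, π/2). Then |η_z| < 1, and T_n(s_z) = (η_zⁿ + η_z⁻ⁿ)/2 where s_z = -(λ₁+λ_N+2z)/(λ_N-λ₁). -/
open Complex in
lemma sqrt_aux16 (w : ℂ) (hw : w ≠ 0) (hwpi : w.arg ≠ Real.pi) :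
    0 < (w ^ ((1 : ℂ) / 2)).re ∧
      ∃ c : ℝ, 0 < c ∧ (w ^ ((1 : ℂ) / 2)).im = c * Real.sin (w.arg / 2) := by
  rw [Complex.cpow_def_of_ne_zero hw]
  have hre : (Complex.log w * (1 / 2)).re = (Complex.log w).re / 2 := by
    simp [Complex.mul_re]; ring
  have him : (Complex.log w * (1 / 2)).im = w.arg / 2 := by
    simp [Complex.mul_im, Complex.log_im]; ring
  rw [Complex.exp_re, Complex.exp_im, hre, him]
  have hlt : w.arg < Real.pi := lt_of_le_of_ne (Complex.arg_le_pi w) hwpi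
  have hgt : -Real.pi < w.arg := Complex.neg_pi_lt_arg w
  have hcos : 0 < Real.cos (w.arg / 2) :=
    Real.cos_pos_of_mem_Ioo ⟨by linarith, by linarith⟩
  exact ⟨mul_pos (Real.exp_pos _) hcos, Real.exp _, Real.exp_pos _, rfl⟩

theorem stmt16 (l1 lN : ℝ) (h1 : 0 < l1) (h1N : l1 < lN)
    (z : ℂ) (hz : z.arg ∈ Set.Ioo (-Real.pi) Real.pi) (hz0 : z ≠ 0)
    (n : ℕ)
    (sz : ℂ) (hsz : sz = -((l1 : ℂ) + (lN : ℂ) + 2 * z) / ((lN : ℂ) - (l1 : ℂ)))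
    (sq1 sqN : ℂ) (hsq1 : sq1 = ((l1 : ℂ) + z) ^ ((1 : ℂ) / 2))
    (hsqN : sqN = ((lN : ℂ) + z) ^ ((1 : ℂ) / 2))
    (η : ℂ) (hη : η = -(sqN - sq1) / (sqN + sq1)) :
    ‖η‖ < 1 ∧
    (Polynomial.Chebyshev.T ℂ (n : ℤ)).eval sz =
      (η ^ (n : ℤ) + η ^ (-(n : ℤ))) / 2 := by
  have hlN : (0 : ℝ) < lN := h1.trans h1N
  -- If z is real, it must be a positive real
  have hzre : z.im = 0 → 0 < z.re := by
    intro him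
    rcases lt_trichotomy z.re 0 with h | h | h
    · exact absurd (Complex.arg_eq_pi_iff.2 ⟨h, him⟩) (ne_of_lt hz.2)
    · exact absurd (Complex.ext h him) hz0
    · exact h
  -- General facts about l + z for l > 0
  have wfact : ∀ l : ℝ, 0 < l → ((l : ℂ) + z) ≠ 0 ∧ ((l : ℂ) + z).arg ≠ Real.pi := by
    intro l hl
    rcases eq_or_ne z.im 0 with him | him
    · have hre : 0 < ((l : ℂ) + z).re := by
        simp only [Complex.add_re, Complex.ofReal_re]
        linarith [hzre him]
      constructor
      · intro h; rw [h] at hre; simp at hre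
      · intro h
        exact absurd (Complex.arg_eq_pi_iff.1 h).1 (not_lt.2 hre.le)
    · have him' : ((l : ℂ) + z).im ≠ 0 := by
        simpa [Complex.add_im] using him
      constructor
      · intro h; rw [h] at him'; simp at him'
      · intro h
        exact him' (Complex.arg_eq_pi_iff.1 h).2
  obtain ⟨hw1, hw1pi⟩ := wfact l1 h1
  obtain ⟨hwN, hwNpi⟩ := wfact lN hlN
  obtain ⟨hvre, c1, hc1, hvim⟩ := sqrt_aux16 _ hw1 hw1pi
  obtain ⟨hure, cN, hcN, huim⟩ := sqrt_aux16 _ hwN hwNpi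
  rw [← hsq1] at hvre hvim
  rw [← hsqN] at hure huim
  -- signs of the args agree
  have hsins : 0 ≤ Real.sin (((lN : ℂ) + z).arg / 2) * Real.sin (((l1 : ℂ) + z).arg / 2) := by
    have hiN : ((lN : ℂ) + z).im = z.im := by simp
    have hi1 : ((l1 : ℂ) + z).im = z.im := by simp
    rcases le_or_gt 0 z.im with him | him
    · have haN : 0 ≤ ((lN : ℂ) + z).arg := Complex.arg_nonneg_iff.2 (hiN ▸ him)
      have ha1 : 0 ≤ ((l1 : ℂ) + z).arg := Complex.arg_nonneg_iff.2 (hi1 ▸ him)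
      have := Complex.arg_le_pi ((lN : ℂ) + z)
      have := Complex.arg_le_pi ((l1 : ℂ) + z)
      have := Real.pi_pos
      exact mul_nonneg
        (Real.sin_nonneg_of_nonneg_of_le_pi (by linarith) (by linarith))
        (Real.sin_nonneg_of_nonneg_of_le_pi (by linarith) (by linarith))
    · have haN : ((lN : ℂ) + z).arg < 0 := Complex.arg_neg_iff.2 (hiN ▸ him)
      have ha1 : ((l1 : ℂ) + z).arg < 0 := Complex.arg_neg_iff.2 (hi1 ▸ him)
      have := Complex.neg_pi_lt_arg ((lN : ℂ) + z)
      have := Complex.neg_pi_lt_arg ((l1 : ℂ) + z)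
      have hsN : Real.sin (((lN : ℂ) + z).arg / 2) ≤ 0 :=
        Real.sin_nonpos_of_nonpos_of_neg_pi_le (by linarith) (by linarith)
      have hs1 : Real.sin (((l1 : ℂ) + z).arg / 2) ≤ 0 :=
        Real.sin_nonpos_of_nonpos_of_neg_pi_le (by linarith) (by linarith)
      nlinarith
  have himprod : 0 ≤ sqN.im * sq1.im := by
    rw [huim, hvim]
    calc (0:ℝ) ≤ (cN * c1) * (Real.sin (((lN : ℂ) + z).arg / 2) *
        Real.sin (((l1 : ℂ) + z).arg / 2)) :=
          mul_nonneg (mul_nonneg hcN.le hc1.le) hsins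
      _ = cN * Real.sin (((lN : ℂ) + z).arg / 2) * (c1 * Real.sin (((l1 : ℂ) + z).arg / 2)) := by
          ring
  have hkey : 0 < sqN.re * sq1.re + sqN.im * sq1.im := by nlinarith
  -- |η| < 1
  have hsumre : 0 < (sqN + sq1).re := by
    simp only [Complex.add_re]; linarith
  have hsumne : sqN + sq1 ≠ 0 := by
    intro h; rw [h] at hsumre; simp at hsumre
  have habslt : ‖sqN - sq1‖ < ‖sqN + sq1‖ := by
    have hsq : Complex.normSq (sqN - sq1) < Complex.normSq (sqN + sq1) := by
      simp only [Complex.normSq_apply, Complex.add_re, Complex.add_im, Complex.sub_re,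
        Complex.sub_im]
      nlinarith
    simpa [Complex.norm_def] using Real.sqrt_lt_sqrt (Complex.normSq_nonneg _) hsq
  have habs : ‖η‖ < 1 := by
    rw [hη, neg_div, norm_neg, norm_div,
      div_lt_one (norm_pos_iff.2 hsumne)]
    exact habslt
  refine ⟨habs, ?_⟩
  -- algebraic identities
  have hu2 : sqN ^ 2 = (lN : ℂ) + z := by
    rw [hsqN, sq, ← Complex.cpow_add _ _ hwN]
    norm_num
  have hv2 : sq1 ^ 2 = (l1 : ℂ) + z := by
    rw [hsq1, sq, ← Complex.cpow_add _ _ hw1]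
    norm_num
  have hne : sqN ≠ sq1 := by
    intro h
    have : (lN : ℂ) + z = (l1 : ℂ) + z := by rw [← hu2, ← hv2, h]
    have : (lN : ℝ) = l1 := by
      have := add_right_cancel this
      exact_mod_cast this
    linarith
  have hsubne : sqN - sq1 ≠ 0 := sub_ne_zero.2 hne
  have hη0 : η ≠ 0 := by
    rw [hη, neg_div]
    exact neg_ne_zero.2 (div_ne_zero hsubne hsumne)
  -- sz = (η + η⁻¹)/2
  have hlNc : (lN : ℂ) = sqN ^ 2 - z := by rw [hu2]; ring
  have hl1c : (l1 : ℂ) = sq1 ^ 2 - z := by rw [hv2]; ring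
  have hinv : η⁻¹ = -(sqN + sq1) / (sqN - sq1) := by
    rw [hη, inv_div, div_neg, neg_div]
  have hsz' : sz = (η + η⁻¹) / 2 := by
    rw [hsz, hinv, hη, hlNc, hl1c,
      show sqN ^ 2 - z - (sq1 ^ 2 - z) = (sqN + sq1) * (sqN - sq1) by ring]
    field_simp
    ring
  -- express via exponentials
  set t := Complex.log η with ht
  have hexp : Complex.exp t = η := Complex.exp_log hη0
  have hcosh : sz = Complex.cos (t * Complex.I) := by
    rw [Complex.cos_mul_I, hsz']
    simp only [Complex.cosh, hexp]
    rw [Complex.exp_neg, hexp]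
  have := Polynomial.Chebyshev.T_complex_cos (t * Complex.I) (n : ℤ)
  rw [hcosh, this]
  have harg : ((n : ℤ) : ℂ) * (t * Complex.I) = (((n : ℤ) : ℂ) * t) * Complex.I := by ring
  rw [harg, Complex.cos_mul_I]
  simp only [Complex.cosh]
  rw [Complex.exp_int_mul, hexp, ← neg_mul,
    show -((n : ℤ) : ℂ) * t = ((-(n : ℤ) : ℤ) : ℂ) * t by push_cast; ring,
    Complex.exp_int_mul, hexp]
end

section
/- Three-term collapse for shifted CG: in the setting above, let p₀ = r₀ and p_{n+1} = r_{n+1} + Σ_{k=0}^{n} β_{nk} p_k with β_{nk} = -(A_z r_{n+1}, p_k)/(A_z p_k, p_k). Then for n ≥ 1 and 0 ≤ k ≤ n-1 one has β_{nk} = 0; in particular p_{n+1} = r_{n+1} + β_n p_n with β_n = -(A_z r_{n+1}, p_n)/(A_z p_n, p_n), and (A_z p_n, p_k) = 0 for all 0 ≤ k ≤ n-1. The key identity is (A_z r_{n+1}, φ) = (r_{n+1}, A_z φ) for all φ ∈ V_{n+1}, which follows from (r_{n+1}, φ) = 0 on V_{n+1} since (A_z u, v) - (u, A_z v) = (z -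 z̄)(u,v). -/
theorem stmt19 {V : Type*} [NormedAddCommGroup V] [InnerProductSpace ℂ V]
    [FiniteDimensional ℂ V]
    (A : V →ₗ[ℂ] V) (hA : A.IsSymmetric)
    (hpos : ∀ v : V, v ≠ 0 → 0 < ((inner ℂ v (A v) : ℂ)).re)
    (z : ℂ) (hz : z.arg ∈ Set.Ioo (-Real.pi) Real.pi) (hz0 : z ≠ 0)
    (g w0 : V) (w r : ℕ → V)
    (hr : ∀ m, r m = g - (z • w m + A (w m)))
    (Vk : ℕ → Submodule ℂ V)
    (hVk : ∀ m, Vk m = Submodule.span ℂ {x : V | ∃ k < m, x = (A ^ k) (r 0)})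
    (hwm : ∀ m, w m - w0 ∈ Vk m)
    (hgal : ∀ m, ∀ φ ∈ Vk m, (inner ℂ φ (z • w m + A (w m)) : ℂ) = (inner ℂ φ g : ℂ))
    (S : V → V → ℂ) (hS : S = fun u v : V => (inner ℂ v (z • u + A u) : ℂ))
    (n : ℕ) (hn : 1 ≤ n)
    (hrne : ∀ m ≤ n + 1, r m ≠ 0)
    (p : ℕ → V) (hp0 : p 0 = r 0)
    (β : ℕ → ℕ → ℂ)
    (hβ : ∀ m k, β m k = -(S (r (m + 1)) (p k)) / (S (p k) (p k)))
    (hprec : ∀ m < n + 1,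
      p (m + 1) = r (m + 1) + ∑ k ∈ Finset.range (m + 1), β m k • p k) :
    (∀ k < n, β n k = 0) ∧
    (p (n + 1) = r (n + 1) + β n n • p n) ∧
    (∀ k < n, S (p n) (p k) = 0) := by
  -- basic form of S
  have hSdef : ∀ u v : V, S u v = z * (inner ℂ v u : ℂ) + (inner ℂ v (A u) : ℂ) := by
    intro u v
    rw [hS]
    simp [inner_add_right, inner_smul_right]
  -- monotonicity of Krylov spaces
  have hmono : ∀ {a b : ℕ}, a ≤ b → Vk a ≤ Vk b := by
    intro a b hab
    rw [hVk, hVk]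
    apply Submodule.span_mono
    rintro x ⟨k, hk, rfl⟩
    exact ⟨k, lt_of_lt_of_le hk hab, rfl⟩
  -- A maps Vk m into Vk (m+1)
  have hAmap : ∀ m, ∀ x ∈ Vk m, A x ∈ Vk (m + 1) := by
    intro m
    have hle : Vk m ≤ (Vk (m + 1)).comap A := by
      rw [hVk m, Submodule.span_le]
      rintro x ⟨k, hk, rfl⟩
      simp only [Submodule.mem_comap, SetLike.mem_coe]
      rw [hVk]
      apply Submodule.subset_span
      exact ⟨k + 1, by omega, by rw [pow_succ', Module.End.mul_apply]⟩
    intro x hx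
    exact hle hx
  -- r 0 ∈ Vk 1
  have hr0 : r 0 ∈ Vk 1 := by
    rw [hVk]
    exact Submodule.subset_span ⟨0, by norm_num, by simp⟩
  -- Galerkin orthogonality
  have horth : ∀ m, ∀ φ ∈ Vk m, (inner ℂ φ (r m) : ℂ) = 0 := by
    intro m φ hφ
    rw [hr m, inner_sub_right, hgal m φ hφ, sub_self]
  -- w 0 = w0
  have hw00 : w 0 = w0 := by
    have h0 : Vk 0 = ⊥ := by
      rw [hVk]
      convert Submodule.span_empty
      ext x
      simp
    have h1 := hwm 0
    rw [h0, Submodule.mem_bot, sub_eq_zero] at h1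
    exact h1
  -- r m ∈ Vk (m+1)
  have hrVk : ∀ m, r m ∈ Vk (m + 1) := by
    intro m
    have h1 : r m = r 0 - (z • (w m - w0) + A (w m - w0)) := by
      rw [hr, hr, hw00, smul_sub, map_sub]
      abel
    rw [h1]
    refine sub_mem (hmono (by omega) hr0) (add_mem ?_ ?_)
    · exact Submodule.smul_mem _ _ (hmono (by omega) (hwm m))
    · exact hAmap m _ (hwm m)
  -- p m ∈ Vk (m+1) for m ≤ n+1
  have hpVk : ∀ m, m ≤ n + 1 → p m ∈ Vk (m + 1) := by
    intro m
    induction m using Nat.strong_induction_on with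
    | _ m ih =>
      intro hm
      match m with
      | 0 =>
        rw [hp0]; exact hr0
      | Nat.succ m =>
        rw [hprec m (by omega)]
        refine add_mem (hrVk (m + 1)) (Submodule.sum_mem _ ?_)
        intro k hk
        simp only [Finset.mem_range] at hk
        exact Submodule.smul_mem _ _ (hmono (by omega) (ih k (by omega) (by omega)))
  -- key vanishing of S (r (m+1)) (p k) for k < m
  have hSrz : ∀ m, m ≤ n → ∀ k < m, S (r (m + 1)) (p k) = 0 := by
    intro m hm k hk
    rw [hSdef]
    have h1 : (inner ℂ (p k) (r (m + 1)) : ℂ) = 0 :=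
      horth (m + 1) _ (hmono (by omega) (hpVk k (by omega)))
    have h2 : (inner ℂ (p k) (A (r (m + 1))) : ℂ) = 0 := by
      rw [← hA]
      exact horth (m + 1) _ (hmono (by omega) (hAmap _ _ (hpVk k (by omega))))
    rw [h1, h2]
    ring
  -- β vanishing
  have hβz : ∀ m, m ≤ n → ∀ k < m, β m k = 0 := by
    intro m hm k hk
    rw [hβ, hSrz m hm k hk, neg_zero, zero_div]
  -- p m ≠ 0 for m ≤ n
  have hpne : ∀ m, m ≤ n → p m ≠ 0 := by
    intro m hm
    match m with
    | 0 =>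
      rw [hp0]; exact hrne 0 (by omega)
    | Nat.succ m =>
      intro hp
      have h1 : (inner ℂ (r (m + 1)) (p (m + 1)) : ℂ) = (inner ℂ (r (m + 1)) (r (m + 1)) : ℂ) := by
        rw [hprec m (by omega), inner_add_right]
        have hz' : ∀ k ∈ Finset.range (m + 1),
            (inner ℂ (r (m + 1)) (β m k • p k) : ℂ) = 0 := by
          intro k hk
          simp only [Finset.mem_range] at hk
          rw [inner_smul_right]
          have h0 : (inner ℂ (r (m + 1)) (p k) : ℂ) = 0 := by
            rw [inner_eq_zero_symm]
            exact horth (m + 1) _ (hmono (by omega) (hpVk k (by omega)))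
          rw [h0, mul_zero]
        rw [inner_sum, Finset.sum_eq_zero hz', add_zero]
      rw [hp, inner_zero_right] at h1
      exact hrne (m + 1) (by omega) (by
        have := h1.symm
        rwa [inner_self_eq_zero] at this)
  -- S v v ≠ 0 for v ≠ 0
  have hSvv : ∀ v : V, v ≠ 0 → S v v ≠ 0 := by
    intro v hv h
    rw [hSdef] at h
    set c : ℂ := (inner ℂ v (A v) : ℂ) with hc
    have hcim : c.im = 0 := by
      have h1 : (starRingEnd ℂ) c = c := by
        rw [hc, inner_conj_symm]
        exact hA v v
      have := congrArg Complex.im h1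
      simp only [Complex.conj_im] at this
      linarith
    have hcre : 0 < c.re := hpos v hv
    have hvv : (inner ℂ v v : ℂ) = ((‖v‖ ^ 2 : ℝ) : ℂ) := by
      rw [inner_self_eq_norm_sq_to_K]
      norm_cast
    rw [hvv] at h
    have ht : (0 : ℝ) < ‖v‖ ^ 2 := pow_pos (norm_pos_iff.mpr hv) 2
    have him := congrArg Complex.im h
    have hre := congrArg Complex.re h
    simp only [Complex.add_im, Complex.add_re, Complex.mul_im, Complex.mul_re,
      Complex.ofReal_im, Complex.ofReal_re, Complex.zero_im, Complex.zero_re,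
      mul_zero, zero_mul, add_zero, zero_add, sub_zero] at him hre
    have hzim : z.im = 0 := by
      rw [hcim, add_zero] at him
      rcases mul_eq_zero.mp him with h' | h'
      · exact h'
      · exact absurd h' (ne_of_gt ht)
    have hzre : z.re < 0 := by nlinarith
    have : z.arg = Real.pi := Complex.arg_eq_pi_iff.mpr ⟨hzre, hzim⟩
    exact absurd this (ne_of_lt hz.2)
  -- linearity of S in the first argument
  have hS_add : ∀ x y u : V, S (x + y) u = S x u + S y u := by
    intro x y u
    simp only [hSdef, inner_add_right, map_add]
    ring
  have hS_smul : ∀ (c : ℂ) (x u : V), S (c • x) u = c * S x u := by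
    intro c x u
    simp only [hSdef, inner_smul_right, map_smul]
    ring
  have hS_sum : ∀ (s : Finset ℕ) (f : ℕ → V) (u : V),
      S (∑ i ∈ s, f i) u = ∑ i ∈ s, S (f i) u := by
    intro s f u
    induction s using Finset.cons_induction with
    | empty => simp [hSdef]
    | cons a s ha ihs => rw [Finset.sum_cons, Finset.sum_cons, hS_add, ihs]
  -- conjugacy
  have hconj : ∀ j, j ≤ n → ∀ k < j, S (p j) (p k) = 0 := by
    intro j
    induction j using Nat.strong_induction_on with
    | _ j ih =>
      intro hj k hk
      obtain ⟨m, rfl⟩ : ∃ m, j = m + 1 := ⟨j - 1, by omega⟩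
      have hk' : k ≤ m := by omega
      have hm : m ≤ n := by omega
      rw [hprec m (by omega), hS_add, hS_sum, Finset.sum_range_succ]
      have hsz : ∑ i ∈ Finset.range m, S (β m i • p i) (p k) = 0 := by
        apply Finset.sum_eq_zero
        intro i hi
        simp only [Finset.mem_range] at hi
        rw [hS_smul, hβz m hm i hi, zero_mul]
      rw [hsz, zero_add, hS_smul]
      rcases eq_or_lt_of_le hk' with hkm | hkm
      · subst hkm
        rw [hβ]
        have hne : S (p k) (p k) ≠ 0 := hSvv (p k) (hpne k (by omega))
        field_simp
        ring
      · rw [hSrz m hm k hkm, ih m (by omega) hm k hkm, mul_zero, add_zero]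
  refine ⟨hβz n le_rfl, ?_, hconj n le_rfl⟩
  rw [hprec n (by omega), Finset.sum_range_succ]
  have hsz : ∑ k ∈ Finset.range n, β n k • p k = 0 := by
    apply Finset.sum_eq_zero
    intro k hk
    simp only [Finset.mem_range] at hk
    rw [hβz n le_rfl k hk, zero_smul]
  rw [hsz, zero_add]
end
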